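/- In the projection setup, define the linear map π : ℝⁿ → ℝ^m by π(v)_j = ⟨v, x j⟩ / d j. Then: (1) the kernel of π equals V; (2) π(v) = π(ν(v)) for all v ∈ ℝⁿ; and (3) the restriction of π to Vᗮ is a linear bijection onto ℝ^m. (This is the factorisation π_E = ρ_E ∘ ν_E with ρ_E an isomorphism, established in the proof of Lemma 3.8 and used to prove that ν_E(F) = ν_{E'}(F') if and only if π_E(F) = π_{E'}(F').) -/

import Mathlib

open RealInnerProductSpace

/-- Factorisation `π_E = ρ_E ∘ ν_E` from the proof of Lemma 3.8: the linear
map `π(v)_j = ⟨v, x j⟩ / d j` has kernel `V`, factors through the orthogonal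
projection `ν`, and restricts to a linear bijection from `Vᗮ` onto `ℝ^m`. -/
theorem stmt10 (n m : ℕ) (hn : 0 < n) (hmn : m ≤ n)
    (g : Fin n → EuclideanSpace ℝ (Fin n))
    (hg : LinearIndependent ℝ g)
    (hgspan : Submodule.span ℝ (Set.range g) = ⊤)
    (x : Fin m → EuclideanSpace ℝ (Fin n)) (d : Fin m → ℝ)
    (hd : ∀ j, 0 < d j)
    (hpair : ∀ (i : Fin n) (j : Fin m),
      ⟪g i, x j⟫ = if (i : ℕ) = (j : ℕ) then d j else 0)
    (V : Submodule ℝ (EuclideanSpace ℝ (Fin n)))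
    (hV : V = Submodule.span ℝ {v | ∃ i : Fin n, m ≤ (i : ℕ) ∧ v = g i})
    (ν : EuclideanSpace ℝ (Fin n) → EuclideanSpace ℝ (Fin n))
    (hν : ∀ v, ν v = (Submodule.orthogonalProjectionOnto Vᗮ v : EuclideanSpace ℝ (Fin n)))
    (π : EuclideanSpace ℝ (Fin n) →ₗ[ℝ] EuclideanSpace ℝ (Fin m))
    (hπ : ∀ (v : EuclideanSpace ℝ (Fin n)) (j : Fin m), π v j = ⟪v, x j⟫ / d j) :
    LinearMap.ker π = V ∧
    (∀ v, π v = π (ν v)) ∧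
    Set.BijOn π (Vᗮ : Set (EuclideanSpace ℝ (Fin n))) Set.univ := by
  have hgtop : ⊤ ≤ Submodule.span ℝ (Set.range g) := hgspan.ge
  let b : Module.Basis (Fin n) ℝ (EuclideanSpace ℝ (Fin n)) := Module.Basis.mk hg hgtop
  have hb : ∀ i, b i = g i := fun i => Module.Basis.mk_apply hg hgtop i
  -- key inner product formula
  have hinner : ∀ (v : EuclideanSpace ℝ (Fin n)) (j : Fin m),
      ⟪v, x j⟫ = b.repr v (Fin.castLE hmn j) * d j := by
    intro v j
    conv_lhs => rw [← b.sum_repr v]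
    rw [sum_inner, Finset.sum_eq_single (Fin.castLE hmn j)]
    · rw [real_inner_smul_left, hb, hpair]
      simp
    · intro i _ hij
      rw [real_inner_smul_left, hb, hpair, if_neg, mul_zero]
      exact fun h => hij (Fin.ext h)
    · simp
  have hπ' : ∀ (v : EuclideanSpace ℝ (Fin n)) (j : Fin m),
      π v j = b.repr v (Fin.castLE hmn j) := by
    intro v j
    rw [hπ, hinner, mul_div_cancel_right₀ _ (hd j).ne']
  have hset : {v | ∃ i : Fin n, m ≤ (i : ℕ) ∧ v = g i}
      = b '' {i : Fin n | m ≤ (i : ℕ)} := by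
    ext v
    constructor
    · rintro ⟨i, hi, rfl⟩; exact ⟨i, hi, (hb i)⟩
    · rintro ⟨i, hi, rfl⟩; exact ⟨i, hi, (hb i)⟩
  have hker : LinearMap.ker π = V := by
    ext v
    rw [LinearMap.mem_ker, hV, hset, Module.Basis.mem_span_image]
    constructor
    · intro h i hi
      simp only [Set.mem_setOf_eq]
      by_contra hlt
      push_neg at hlt
      have : π v ⟨(i : ℕ), hlt⟩ = 0 := by rw [h]; rfl
      rw [hπ'] at this
      have hcast : Fin.castLE hmn ⟨(i : ℕ), hlt⟩ = i := Fin.ext rfl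
      rw [hcast] at this
      exact (Finsupp.mem_support_iff.mp hi) this
    · intro h
      apply PiLp.ext
      intro j
      rw [hπ']
      by_contra hne
      have := h (Finsupp.mem_support_iff.mpr hne)
      simp only [Set.mem_setOf_eq, Fin.coe_castLE] at this
      exact absurd this (Nat.not_le.mpr j.isLt)
  have hfact : ∀ v, π v = π (ν v) := by
    intro v
    have h1 : v - ν v ∈ V := by
      rw [hν]
      have := Submodule.sub_starProjection_mem_orthogonal (K := Vᗮ) v
      rwa [Submodule.orthogonal_orthogonal] at this
    have h2 : π (v - ν v) = 0 := by
      rw [← LinearMap.mem_ker, hker]; exact h1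
    rw [map_sub, sub_eq_zero] at h2
    exact h2
  refine ⟨hker, hfact, fun _ _ => trivial, ?_, ?_⟩
  · intro u hu w hw huw
    have h1 : u - w ∈ V := by
      rw [← hker, LinearMap.mem_ker, map_sub, sub_eq_zero]; exact huw
    have h2 : u - w ∈ Vᗮ := Submodule.sub_mem _ hu hw
    have := (Submodule.orthogonal_disjoint V).le_bot ⟨h1, h2⟩
    rw [Submodule.mem_bot, sub_eq_zero] at this
    exact this
  · intro y _
    set w : EuclideanSpace ℝ (Fin n) := ∑ k : Fin m, y k • g (Fin.castLE hmn k) with hw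
    have hπw : π w = y := by
      apply PiLp.ext
      intro j
      rw [hπ, hw]
      have : ⟪(∑ k : Fin m, y k • g (Fin.castLE hmn k) : EuclideanSpace ℝ (Fin n)), x j⟫
          = y j * d j := by
        rw [sum_inner, Finset.sum_eq_single j]
        · rw [real_inner_smul_left, hpair]
          simp
        · intro k _ hkj
          rw [real_inner_smul_left, hpair, if_neg, mul_zero]
          simpa using fun h => hkj (Fin.ext h)
        · simp
      rw [this, mul_div_cancel_right₀ _ (hd j).ne']
    refine ⟨ν w, ?_, ?_⟩
    · rw [hν]; exact (Submodule.orthogonalProjectionOnto Vᗮ w).2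
    · rw [← hfact, hπw]
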